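/- Let M = (F, r) be a maniplex of rank n. Then the raviolo R(M), with flag set F × ZMod 2 and permutations r̄_i(u, a) = (r_i u, a) for i < n and r̄_n(u, a) = (u, a + 1), is a maniplex of rank n + 1, and R(M) has exactly two n-faces. -/
import Mathlib



/-- The orbit of a flag `u` under the subgroup generated by `{r j : j ∈ J}`. -/
def MOrbit {n : ℕ} {F : Type*} (r : Fin n → Equiv.Perm F) (J : Set (Fin n)) (u : F) :
    Set F :=
  {v | ∃ g ∈ Subgroup.closure (r '' J), v = g u}

/-- `(F, r)` is a maniplex of rank `n`. -/
def IsManiplex {F : Type*} (n : ℕ) (r : Fin n → Equiv.Perm F) : Prop :=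
  Nonempty F ∧
  (∀ (i : Fin n) (u : F), r i (r i u) = u) ∧
  (∀ (i : Fin n) (u : F), r i u ≠ u) ∧
  (∀ u v : F, v ∈ MOrbit r Set.univ u) ∧
  ∀ i j : Fin n, 1 < |(i : ℤ) - (j : ℤ)| →
    (∀ u : F, r i (r j (r i (r j u))) = u) ∧ ∀ u : F, r i (r j u) ≠ u

/-- The `i`-face containing the flag `u`. -/
def MFace {n : ℕ} {F : Type*} (r : Fin n → Equiv.Perm F) (i : Fin n) (u : F) : Set F :=
  MOrbit r {i}ᶜ u

/-- A maniplex is faithful if the intersection of all faces containing a flag is a singleton. -/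
def IsFaithful {n : ℕ} {F : Type*} (r : Fin n → Equiv.Perm F) : Prop :=
  ∀ u : F, (⋂ i : Fin n, MFace r i u) = {u}

/-- `O` is a face of rank `k ∈ {-1, …, n}`, where the improper ranks `-1` and `n`
give the whole flag set. -/
def IsRankFace {n : ℕ} {F : Type*} (r : Fin n → Equiv.Perm F) (k : ℤ) (O : Set F) : Prop :=
  ((∃ i : Fin n, (i : ℤ) = k) ∧ ∃ u : F, O = MOrbit r {j : Fin n | (j : ℤ) ≠ k} u) ∨
  ((¬ ∃ i : Fin n, (i : ℤ) = k) ∧ O = Set.univ)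

/-- A maniplex is thin if any incident pair of an `(i-1)`-face and `(i+1)`-face lies in
exactly two `i`-faces. -/
def IsThin {n : ℕ} {F : Type*} (r : Fin n → Equiv.Perm F) : Prop :=
  ∀ (i : Fin n) (Fm Fp : Set F),
    IsRankFace r ((i : ℤ) - 1) Fm → IsRankFace r ((i : ℤ) + 1) Fp →
    (Fm ∩ Fp).Nonempty →
    ∃ O₁ O₂ : Set F, O₁ ≠ O₂ ∧
      {O : Set F | (∃ u : F, O = MFace r i u) ∧ (O ∩ (Fm ∩ Fp)).Nonempty} = {O₁, O₂}

/-- The component intersection property. -/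
def HasCIP {n : ℕ} {F : Type*} (r : Fin n → Equiv.Perm F) : Prop :=
  ∀ (k : ℕ) (j : Fin k → Fin n) (H : Fin k → Set F),
    Function.Injective j →
    (∀ l, ∃ u : F, H l = MFace r (j l) u) →
    (∀ l m, (H l ∩ H m).Nonempty) →
    ∀ u v : F, u ∈ ⋂ l, H l → v ∈ ⋂ l, H l →
      v ∈ MOrbit r {m : Fin n | m ∉ Set.range j} u

/-- An automorphism of a maniplex: a permutation of the flags commuting with every `r i`. -/
def IsManiplexAuto {n : ℕ} {F : Type*} (r : Fin n → Equiv.Perm F) (φ : Equiv.Perm F) : Prop :=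
  ∀ (i : Fin n) (u : F), φ (r i u) = r i (φ u)

/-- A maniplex is regular if its automorphism group is transitive on flags. -/
def IsRegularManiplex {n : ℕ} {F : Type*} (r : Fin n → Equiv.Perm F) : Prop :=
  ∀ u v : F, ∃ φ : Equiv.Perm F, IsManiplexAuto r φ ∧ φ u = v

/-- A face `H`, an orbit of the subgroup generated by `{r j : j ∈ J}`, is bipartite. -/
def FaceBipartite {n : ℕ} {F : Type*} (r : Fin n → Equiv.Perm F) (J : Set (Fin n))
    (H : Set F) : Prop :=
  ∃ f : F → ZMod 2, ∀ j ∈ J, ∀ x ∈ H, f (r j x) = f x + 1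

/-- The number of `i`-faces of a maniplex. -/
noncomputable def NumFaces {n : ℕ} {F : Type*} (r : Fin n → Equiv.Perm F) (i : Fin n) : ℕ :=
  {O : Set F | ∃ u : F, O = MFace r i u}.ncard

/-- The canonical double cover of a maniplex. -/
def cdc {n : ℕ} {F : Type*} (r : Fin n → Equiv.Perm F) (i : Fin n) :
    Equiv.Perm (F × ZMod 2) :=
  Equiv.prodCongr (r i) (Equiv.addRight (1 : ZMod 2))

/-- The raviolo of a maniplex of rank `n`: a maniplex of rank `n+1` with two facets. -/
def raviolo {n : ℕ} {F : Type*} (r : Fin n → Equiv.Perm F) (i : Fin (n + 1)) :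
    Equiv.Perm (F × ZMod 2) :=
  if h : (i : ℕ) < n then Equiv.prodCongr (r ⟨i, h⟩) (Equiv.refl (ZMod 2))
  else Equiv.prodCongr (Equiv.refl F) (Equiv.addRight (1 : ZMod 2))

/-- A voltage assignment on a maniplex. -/
def IsVoltage {n : ℕ} {F : Type*} {G : Type*} [Group G] (r : Fin n → Equiv.Perm F)
    (ζ : F × Fin n → G) : Prop :=
  ∀ (u : F) (i : Fin n), ζ (r i u, i) = (ζ (u, i))⁻¹

/-- The permutations of the derived cover of a maniplex with voltage assignment `ζ`. -/
def mcov {n : ℕ} {F : Type*} {G : Type*} [Group G] (r : Fin n → Equiv.Perm F)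
    (ζ : F × Fin n → G) (i : Fin n) : Equiv.Perm (F × G) where
  toFun p := (r i p.1, ζ (p.1, i) * p.2)
  invFun p := ((r i).symm p.1, (ζ ((r i).symm p.1, i))⁻¹ * p.2)
  left_inv p := by simp
  right_inv p := by simp

section Aux

variable {n : ℕ} {F : Type*}

lemma raviolo_lt (r : Fin n → Equiv.Perm F) {i : Fin (n + 1)} (hi : (i : ℕ) < n)
    (p : F × ZMod 2) : raviolo r i p = (r ⟨i, hi⟩ p.1, p.2) := by
  obtain ⟨u, a⟩ := p
  simp [raviolo, hi]

lemma raviolo_ge (r : Fin n → Equiv.Perm F) {i : Fin (n + 1)} (hi : ¬ (i : ℕ) < n)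
    (p : F × ZMod 2) : raviolo r i p = (p.1, p.2 + 1) := by
  obtain ⟨u, a⟩ := p
  simp [raviolo, hi]

/-- Lift a permutation of `F` to `F × ZMod 2` acting on the first coordinate. -/
def pHom : Equiv.Perm F →* Equiv.Perm (F × ZMod 2) where
  toFun g := Equiv.prodCongr g (Equiv.refl _)
  map_one' := by ext p <;> simp
  map_mul' g h := by ext p <;> simp

@[simp] lemma pHom_apply (g : Equiv.Perm F) (p : F × ZMod 2) :
    (pHom g) p = (g p.1, p.2) := rfl

lemma pHom_r (r : Fin n → Equiv.Perm F) (i : Fin n) :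
    pHom (r i) = raviolo r i.castSucc := by
  have hi : ((i.castSucc : Fin (n + 1)) : ℕ) < n := by simp [i.isLt]
  ext p
  · simp [raviolo_lt r hi]
  · simp [raviolo_lt r hi]

lemma pHom_mem {r : Fin n → Equiv.Perm F} {J : Set (Fin n)} {J' : Set (Fin (n + 1))}
    (hJ : ∀ i ∈ J, i.castSucc ∈ J') {g : Equiv.Perm F}
    (hg : g ∈ Subgroup.closure (r '' J)) :
    pHom g ∈ Subgroup.closure (raviolo r '' J') := by
  have h1 : pHom g ∈ (Subgroup.closure (r '' J)).map pHom := ⟨g, hg, rfl⟩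
  rw [MonoidHom.map_closure] at h1
  refine Subgroup.closure_mono ?_ h1
  rintro _ ⟨_, ⟨i, hi, rfl⟩, rfl⟩
  exact ⟨i.castSucc, hJ i hi, (pHom_r r i).symm⟩

/-- The subgroup of permutations of `F × ZMod 2` preserving the second coordinate. -/
def secK (F : Type*) : Subgroup (Equiv.Perm (F × ZMod 2)) where
  carrier := {g | ∀ p, (g p).2 = p.2}
  one_mem' := fun _ => rfl
  mul_mem' := by
    intro a b ha hb p
    have := (ha (b p)).trans (hb p)
    simpa [Equiv.Perm.mul_apply] using this
  inv_mem' := by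
    intro g hg p
    have := hg (g⁻¹ p)
    simpa using this.symm

lemma raviolo_face (r : Fin n → Equiv.Perm F) (hM : IsManiplex n r) (u : F) (a : ZMod 2) :
    MFace (raviolo r) (Fin.last n) (u, a) = {p : F × ZMod 2 | p.2 = a} := by
  ext v
  constructor
  · rintro ⟨g, hg, rfl⟩
    have hK : g ∈ secK F := by
      refine Subgroup.closure_le (secK F) |>.2 ?_ hg
      rintro _ ⟨i, hi, rfl⟩
      have hilt : (i : ℕ) < n := by
        rcases lt_or_eq_of_le (Nat.lt_succ_iff.mp i.isLt) with h | h
        · exact h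
        · exact absurd (Fin.ext h) hi
      intro p
      rw [raviolo_lt r hilt]
    exact hK (u, a)
  · intro hv
    obtain ⟨g, hg, hgu⟩ := hM.2.2.2.1 u v.1
    refine ⟨pHom g, pHom_mem (J := Set.univ) ?_ hg, ?_⟩
    · intro i _
      simp only [Set.mem_compl_iff, Set.mem_singleton_iff]
      intro h
      have : ((i : ℕ)) = n := by
        have := congrArg Fin.val h
        simpa using this
      exact absurd this (Nat.ne_of_lt i.isLt)
    · show v = (g u, a)
      exact Prod.ext hgu hv

end Aux

/-- The raviolo of a maniplex of rank `n` is a maniplex of rank `n+1` having exactly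
two `n`-faces. -/
theorem stmt15 {n : ℕ} {F : Type*} [Fintype F] (r : Fin n → Equiv.Perm F)
    (hM : IsManiplex n r) :
    IsManiplex (n + 1) (raviolo r) ∧
      {O : Set (F × ZMod 2) | ∃ p : F × ZMod 2, O = MFace (raviolo r) (Fin.last n) p}.ncard
        = 2 := by
  obtain ⟨hne, hinv, hfpf, htrans, hcomm⟩ := hM
  obtain ⟨u₀⟩ := hne
  have hz : ∀ a : ZMod 2, a + 1 ≠ a := by decide
  have hz2 : ∀ a b : ZMod 2, b = a ∨ b = a + 1 := by decide
  have hz3 : ∀ a : ZMod 2, a + 1 + 1 = a := by decide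
  constructor
  · refine ⟨⟨(u₀, 0)⟩, ?_, ?_, ?_, ?_⟩
    · -- involution
      intro i p
      by_cases hi : (i : ℕ) < n
      · simp [raviolo_lt r hi, hinv]
      · rw [raviolo_ge r hi, raviolo_ge r hi]
        simp [hz3]
    · -- fixed-point-free
      intro i p
      by_cases hi : (i : ℕ) < n
      · rw [raviolo_lt r hi]
        intro h
        exact hfpf ⟨i, hi⟩ p.1 (congrArg Prod.fst h)
      · rw [raviolo_ge r hi]
        intro h
        exact hz p.2 (congrArg Prod.snd h)
    · -- transitivity
      intro p q
      obtain ⟨g, hg, hgu⟩ := htrans p.1 q.1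
      have hmem : pHom g ∈ Subgroup.closure (raviolo r '' Set.univ) :=
        pHom_mem (fun i _ => Set.mem_univ _) hg
      rcases hz2 p.2 q.2 with h | h
      · exact ⟨pHom g, hmem, Prod.ext hgu h⟩
      · refine ⟨raviolo r (Fin.last n) * pHom g, ?_, ?_⟩
        · exact mul_mem (Subgroup.subset_closure ⟨Fin.last n, Set.mem_univ _, rfl⟩) hmem
        · have hlast : ¬ ((Fin.last n : Fin (n + 1)) : ℕ) < n := by simp
          show q = raviolo r (Fin.last n) (pHom g p)
          rw [pHom_apply, raviolo_ge r hlast]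
          exact Prod.ext hgu h
    · -- commuting condition
      intro i j hij
      by_cases hi : (i : ℕ) < n <;> by_cases hj : (j : ℕ) < n
      · have hij' : 1 < |((⟨i, hi⟩ : Fin n) : ℤ) - ((⟨j, hj⟩ : Fin n) : ℤ)| := by
          simpa using hij
        obtain ⟨h1, h2⟩ := hcomm ⟨i, hi⟩ ⟨j, hj⟩ hij'
        constructor
        · intro p
          simp [raviolo_lt r hi, raviolo_lt r hj, h1 p.1]
        · intro p h
          rw [raviolo_lt r hj, raviolo_lt r hi] at h
          exact h2 p.1 (congrArg Prod.fst h)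
      · constructor
        · intro p
          rw [raviolo_ge r hj, raviolo_lt r hi, raviolo_ge r hj, raviolo_lt r hi]
          simp [hinv, hz3]
        · intro p h
          rw [raviolo_ge r hj, raviolo_lt r hi] at h
          exact hz p.2 (congrArg Prod.snd h)
      · constructor
        · intro p
          rw [raviolo_lt r hj, raviolo_ge r hi, raviolo_lt r hj, raviolo_ge r hi]
          simp [hinv, hz3, ← add_assoc]
        · intro p h
          rw [raviolo_lt r hj, raviolo_ge r hi] at h
          exact hz p.2 (congrArg Prod.snd h)
      · exfalso
        have hi' : (i : ℕ) = n := Nat.le_antisymm (Nat.lt_succ_iff.mp i.isLt) (Nat.le_of_not_lt hi)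
        have hj' : (j : ℕ) = n := Nat.le_antisymm (Nat.lt_succ_iff.mp j.isLt) (Nat.le_of_not_lt hj)
        rw [hi', hj'] at hij
        simp at hij
  · -- exactly two n-faces
    have hM' : IsManiplex n r := ⟨⟨u₀⟩, hinv, hfpf, htrans, hcomm⟩
    have hset : {O : Set (F × ZMod 2) | ∃ p : F × ZMod 2, O = MFace (raviolo r) (Fin.last n) p}
        = {{p : F × ZMod 2 | p.2 = 0}, {p : F × ZMod 2 | p.2 = 1}} := by
      ext O
      constructor
      · rintro ⟨⟨v, a⟩, rfl⟩
        rw [raviolo_face r hM' v a]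
        rcases hz2 0 a with h | h
        · left; rw [h]
        · right; rw [h]; norm_num
      · rintro (rfl | rfl)
        · exact ⟨(u₀, 0), (raviolo_face r hM' u₀ 0).symm⟩
        · exact ⟨(u₀, 1), (raviolo_face r hM' u₀ 1).symm⟩
    rw [hset]
    refine Set.ncard_pair ?_
    intro h
    have h0 : (u₀, (0 : ZMod 2)) ∈ {p : F × ZMod 2 | p.2 = 0} := rfl
    rw [h] at h0
    exact absurd h0 (by norm_num)
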